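/- arXiv:math/9804005 — 2 statements merged into one kernel-verified Lean document; each statement's English description precedes it below -/
import Mathlib

section
/- Let M be a ℤ-graded module over the polynomial ring k[t]: M is a k[t]-module equipped with k-submodules (M_i)_{i∈ℤ} forming an internal direct sum decomposition M = ⊕_{i∈ℤ} M_i and satisfying t·M_i ⊆ M_{i+1} for all i. Let N ⊆ M be a graded k[t]-submodule, i.e. N = ⊕_{i∈ℤ} (N ∩ M_i). Then N ∩ (t−1)·M = (t−1)·N; consequently, the functor sending a graded k[t]-module M to M/(t−1)M is exact: for any inclusion N ⊆ M of graded k[t]-modules the induced map N/(t−1)N → M/(t−1)M is injective. -/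
universe u

open Polynomial DirectSum

set_option maxHeartbeats 1000000 in
set_option synthInstance.maxHeartbeats 400000 in
theorem statement13_key (k : Type u) [Field k]
    (M : Type u) [AddCommGroup M] [Module (Polynomial k) M]
    [Module k M] [IsScalarTower k (Polynomial k) M]
    (Mi : ℤ → Submodule k M)
    (hinternal : DirectSum.IsInternal Mi)
    (hshift : ∀ (i : ℤ), ∀ x ∈ Mi i, (Polynomial.X : Polynomial k) • x ∈ Mi (i + 1))
    (N : Submodule (Polynomial k) M)
    (hgraded : N.restrictScalars k = ⨆ i : ℤ, (N.restrictScalars k ⊓ Mi i)) :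
    ∀ m : M, ((Polynomial.X : Polynomial k) - 1) • m ∈ N → m ∈ N := by
  classical
  set e := LinearEquiv.ofBijective (DirectSum.coeLinearMap Mi) hinternal with he
  -- components of elements of N are in N
  have hcomp : ∀ n ∈ N, ∀ i : ℤ, ((e.symm n) i : M) ∈ N := by
    intro n hn
    have hn' : n ∈ ⨆ i : ℤ, (N.restrictScalars k ⊓ Mi i) := by
      rw [← hgraded]; exact hn
    refine Submodule.iSup_induction (motive := fun x => ∀ i : ℤ, ((e.symm x) i : M) ∈ N)
      _ hn' ?_ ?_ ?_
    · intro j x hx i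
      rcases eq_or_ne i j with rfl | hij
      · rw [hinternal.ofBijective_coeLinearMap_of_mem hx.2]
        exact hx.1
      · rw [hinternal.ofBijective_coeLinearMap_of_mem_ne hij.symm hx.2]
        exact N.zero_mem
    · intro i; simp
    · intro x y hx hy i
      rw [map_add, DirectSum.add_apply, Submodule.coe_add]
      exact N.add_mem (hx i) (hy i)
  -- m is the sum of its components
  have hsum : ∀ m : M, m = ∑ i ∈ (e.symm m).support, ((e.symm m) i : M) := by
    intro m
    conv_lhs => rw [← e.apply_symm_apply m, ← DirectSum.sum_support_of (e.symm m)]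
    rw [map_sum]
    simp [he, DirectSum.coeLinearMap_of]
    exact Finset.sum_congr rfl fun i _ => DirectSum.coeLinearMap_of Mi i _
  -- component of X • m below the support vanishes
  have hX : ∀ (m : M) (j : ℤ), (∀ i ∈ (e.symm m).support, j ≤ i) →
      ((e.symm ((Polynomial.X : Polynomial k) • m)) j : M) = 0 := by
    intro m j hj
    have : (Polynomial.X : Polynomial k) • m
        = ∑ i ∈ (e.symm m).support, (Polynomial.X : Polynomial k) • ((e.symm m) i : M) := by
      conv_lhs => rw [hsum m]
      rw [Finset.smul_sum]
    rw [this, map_sum, DFinsupp.finset_sum_apply]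
    rw [Submodule.coe_sum]
    refine Finset.sum_eq_zero fun i hi => ?_
    have hmem : (Polynomial.X : Polynomial k) • ((e.symm m) i : M) ∈ Mi (i + 1) :=
      hshift i _ ((e.symm m) i).2
    have hne : j ≠ i + 1 := by
      have := hj i hi; omega
    rw [hinternal.ofBijective_coeLinearMap_of_mem_ne hne.symm hmem]
    rfl
  -- main induction on the size of the support
  have hkey : ∀ (c : ℕ) (m : M), (e.symm m).support.card = c →
      ((Polynomial.X : Polynomial k) - 1) • m ∈ N → m ∈ N := by
    intro c
    induction c using Nat.strong_induction_on with
    | _ c ih =>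
      intro m hc hm
      by_cases h0 : m = 0
      · simpa [h0] using N.zero_mem
      have hsupp : (e.symm m).support.Nonempty := by
        rw [Finset.nonempty_iff_ne_empty]
        intro h
        apply h0
        have h1 : e.symm m = 0 := DFinsupp.support_eq_empty.mp h
        have := e.apply_symm_apply m
        rw [h1, map_zero] at this
        exact this.symm
      set i₀ := (e.symm m).support.min' hsupp with hi₀
      set m₀ : M := ((e.symm m) i₀ : M) with hm₀def
      have hm₀mem : m₀ ∈ Mi i₀ := ((e.symm m) i₀).2
      -- component of (X-1) • m at i₀ is -m₀
      have hcomp_n : ((e.symm (((Polynomial.X : Polynomial k) - 1) • m)) i₀ : M) = -m₀ := by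
        have hrw : ((Polynomial.X : Polynomial k) - 1) • m
            = (Polynomial.X : Polynomial k) • m - m := by
          rw [sub_smul, one_smul]
        rw [hrw, map_sub, DirectSum.sub_apply, Submodule.coe_sub,
          hX m i₀ (fun i hi => Finset.min'_le _ _ hi)]
        simp [hm₀def]
      have hm₀N : m₀ ∈ N := by
        have := hcomp _ hm i₀
        rw [hcomp_n] at this
        simpa using N.neg_mem this
      -- support of m - m₀ shrinks
      have hsub : (e.symm (m - m₀)).support ⊆ (e.symm m).support.erase i₀ := by
        intro j hj
        have hj' : (e.symm (m - m₀)) j ≠ 0 := DFinsupp.mem_support_iff.mp hj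
        have heq : (e.symm (m - m₀)) j = (e.symm m) j - (e.symm m₀) j := by
          rw [map_sub, DirectSum.sub_apply]
        rw [Finset.mem_erase]
        have hjne : j ≠ i₀ := by
          rintro rfl
          apply hj'
          rw [heq, hinternal.ofBijective_coeLinearMap_of_mem hm₀mem, sub_eq_zero]
        refine ⟨hjne, ?_⟩
        rw [DFinsupp.mem_support_iff]
        intro hz
        apply hj'
        rw [heq, hz, hinternal.ofBijective_coeLinearMap_of_mem_ne hjne.symm hm₀mem,
          sub_zero]
      have hcard : (e.symm (m - m₀)).support.card < c := by
        calc (e.symm (m - m₀)).support.card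
            ≤ ((e.symm m).support.erase i₀).card := Finset.card_le_card hsub
          _ < (e.symm m).support.card :=
              Finset.card_erase_lt_of_mem ((e.symm m).support.min'_mem hsupp)
          _ = c := hc
      have hmem' : ((Polynomial.X : Polynomial k) - 1) • (m - m₀) ∈ N := by
        rw [smul_sub]
        exact N.sub_mem hm (N.smul_mem _ hm₀N)
      have h1 : m - m₀ ∈ N := ih _ hcard (m - m₀) rfl hmem'
      have : m = (m - m₀) + m₀ := by abel
      rw [this]
      exact N.add_mem h1 hm₀N
  exact fun m hm => hkey _ m rfl hm

/-- Let `M` be a ℤ-graded module over `k[t]`: the grading is a family of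
`k`-submodules `(Mᵢ)ᵢ` forming an internal direct sum decomposition of `M` and
satisfying `t · Mᵢ ⊆ M_{i+1}`.  Let `N ⊆ M` be a graded `k[t]`-submodule, i.e.
`N = ⊕ᵢ (N ⊓ Mᵢ)`.  Then `N ⊓ (t−1)·M = (t−1)·N`; consequently the functor
`M ↦ M/(t−1)M` is exact on graded modules: the induced map
`N/(t−1)N → M/(t−1)M` is injective. -/
theorem statement13 (k : Type u) [Field k]
    (M : Type u) [AddCommGroup M] [Module (Polynomial k) M]
    [Module k M] [IsScalarTower k (Polynomial k) M]
    (Mi : ℤ → Submodule k M)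
    (hinternal : DirectSum.IsInternal Mi)
    (hshift : ∀ (i : ℤ), ∀ x ∈ Mi i, (Polynomial.X : Polynomial k) • x ∈ Mi (i + 1))
    (N : Submodule (Polynomial k) M)
    (hgraded : N.restrictScalars k = ⨆ i : ℤ, (N.restrictScalars k ⊓ Mi i)) :
    (N ⊓ LinearMap.range (LinearMap.lsmul (Polynomial k) M (Polynomial.X - 1)) =
      N.map (LinearMap.lsmul (Polynomial k) M (Polynomial.X - 1))) ∧
    Function.Injective (Submodule.mapQ
      (LinearMap.range (LinearMap.lsmul (Polynomial k) (↥N) (Polynomial.X - 1)))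
      (LinearMap.range (LinearMap.lsmul (Polynomial k) M (Polynomial.X - 1)))
      N.subtype
      (by
        rintro x ⟨y, rfl⟩
        exact ⟨(y : M), rfl⟩)) := by
  have hkey := statement13_key k M Mi hinternal hshift N hgraded
  constructor
  · apply le_antisymm
    · rintro x ⟨hxN, y, hy⟩
      simp only [LinearMap.lsmul_apply] at hy
      subst hy
      exact ⟨y, hkey y hxN, rfl⟩
    · rintro x ⟨y, hyN, rfl⟩
      exact ⟨N.smul_mem _ hyN, ⟨y, rfl⟩⟩
  · rw [← LinearMap.ker_eq_bot, LinearMap.ker_eq_bot']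
    intro a ha
    obtain ⟨x, rfl⟩ := Submodule.Quotient.mk_surjective _ a
    rw [Submodule.mapQ_apply, Submodule.Quotient.mk_eq_zero] at ha
    obtain ⟨y, hy⟩ := ha
    simp only [LinearMap.lsmul_apply] at hy
    have hyN : y ∈ N := hkey y (by rw [hy]; exact x.2)
    rw [Submodule.Quotient.mk_eq_zero]
    exact ⟨⟨y, hyN⟩, Subtype.ext hy⟩
end

section
/- Let A be a left noetherian ring and L a complete linear order with least element ⊥. Suppose dim assigns to every finitely generated left A-module an element of L, is invariant under A-module isomorphism, and satisfies: dim 0 = ⊥, and dim M = max(dim M′, dim M″) for every short exact sequence 0 → M′ → M → M″ → 0 of finitely generated left A-modules. Define, for an arbitrary left A-module M, Dim M := sup { dim N : N a finitely generated submodule of M }. Then Dim agrees with dim on finitely generated modules, Dim 0 = ⊥, Dim M = max(Dim M′, Dim M″) for every short exact sequence 0 → M′ → M → M″ → 0 of arbitrary left A-modules, and Dim is the unique isomorphism-invariant function on left A-modules extending dim which satisfies Dim M = sup { Dim M′ : M′ ⊆ M finitely generated } for all M. -/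
universe u v

section AuxSt14

variable {A : Type u} [Ring A] [IsNoetherianRing A]

lemma St14.fg_of_le {M : Type u} [AddCommGroup M] [Module A M] {p q : Submodule A M}
    (h : p ≤ q) (hq : q.FG) : p.FG := by
  haveI : IsNoetherian A ↥q := isNoetherian_of_fg_of_noetherian q hq
  have h1 : (p.comap q.subtype).FG := IsNoetherian.noetherian _
  have h2 := h1.map q.subtype
  rwa [Submodule.map_comap_subtype, inf_eq_right.mpr h] at h2

variable (L : Type v) [CompleteLinearOrder L]
variable (dim : ∀ (M : Type u) [AddCommGroup M] [Module A M], L)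

/-- Core exactness lemma: for `N ⊆ M` f.g. and `g : M → M''`,
`dim N = max (dim (ker g ⊓ N)) (dim (N.map g))`. -/
lemma St14.key
    (hiso : ∀ (M N : Type u) [AddCommGroup M] [Module A M] [AddCommGroup N] [Module A N],
      Module.Finite A M → Module.Finite A N → (M ≃ₗ[A] N) → dim M = dim N)
    (hexact : ∀ (M' M M'' : Type u)
      [AddCommGroup M'] [Module A M'] [AddCommGroup M] [Module A M]
      [AddCommGroup M''] [Module A M''],
      Module.Finite A M' → Module.Finite A M → Module.Finite A M'' →
      ∀ (f : M' →ₗ[A] M) (g : M →ₗ[A] M''),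
        Function.Injective f → Function.Surjective g →
        LinearMap.range f = LinearMap.ker g →
        dim M = max (dim M') (dim M''))
    {M M'' : Type u} [AddCommGroup M] [Module A M] [AddCommGroup M''] [Module A M'']
    (g : M →ₗ[A] M'') (N : Submodule A M) (hN : N.FG) :
    dim ↥N = max (dim ↥(LinearMap.ker g ⊓ N)) (dim ↥(N.map g)) := by
  haveI hNf : Module.Finite A ↥N := Module.Finite.iff_fg.mpr hN
  haveI : IsNoetherian A ↥N := isNoetherian_of_isNoetherianRing_of_finite A ↥N
  set g₀ : ↥N →ₗ[A] ↥(N.map g) :=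
    g.restrict (p := N) (q := N.map g) (fun x hx => Submodule.mem_map_of_mem hx) with hg₀
  have hsurj : Function.Surjective g₀ := by
    rintro ⟨y, x, hx, rfl⟩
    exact ⟨⟨x, hx⟩, rfl⟩
  haveI : Module.Finite A ↥(N.map g) := Module.Finite.iff_fg.mpr (hN.map g)
  haveI : Module.Finite A ↥(LinearMap.ker g₀) :=
    Module.Finite.iff_fg.mpr (IsNoetherian.noetherian _)
  have heq := hexact ↥(LinearMap.ker g₀) ↥N ↥(N.map g) ‹_› ‹_› ‹_›
    (LinearMap.ker g₀).subtype g₀ (Submodule.injective_subtype _) hsurj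
    (Submodule.range_subtype _)
  rw [heq]
  congr 1
  have hker : LinearMap.ker g₀ = (LinearMap.ker g ⊓ N).comap N.subtype := by
    ext ⟨x, hx⟩
    simp [hg₀, LinearMap.restrict_apply, Subtype.ext_iff, hx]
  haveI : Module.Finite A ↥(LinearMap.ker g ⊓ N) :=
    Module.Finite.iff_fg.mpr (St14.fg_of_le inf_le_right hN)
  refine hiso _ _ ‹_› ‹_› ?_
  exact (LinearEquiv.ofEq _ _ hker).trans (Submodule.comapSubtypeEquivOfLe inf_le_right)

end AuxSt14

/-- The canonical extension of a dimension function `dim` (defined on all modules, but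
constrained only on finitely generated ones) to arbitrary modules:
`Dim M = sup { dim N : N a finitely generated submodule of M }`. -/
noncomputable def DimExt (A : Type u) [Ring A] (L : Type v) [CompleteLinearOrder L]
    (dim : ∀ (M : Type u) [AddCommGroup M] [Module A M], L)
    (M : Type u) [AddCommGroup M] [Module A M] : L :=
  sSup {l : L | ∃ N : Submodule A M, N.FG ∧ l = dim ↥N}

/-- Let `A` be a left noetherian ring and `L` a complete linear order
with least element `⊥`.  Suppose `dim` assigns to every finitely generated left
`A`-module an element of `L`, is isomorphism-invariant, satisfies `dim 0 = ⊥`, and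
`dim M = max (dim M') (dim M'')` for every short exact sequence `0 → M' → M → M'' → 0`
of finitely generated modules.  Define `Dim M := sup { dim N : N ⊆ M f.g. }`.  Then
`Dim` agrees with `dim` on finitely generated modules, `Dim 0 = ⊥`, `Dim` is exact on
arbitrary short exact sequences, and `Dim` is the unique isomorphism-invariant
extension of `dim` satisfying `Dim M = sup { Dim M' : M' ⊆ M f.g. }`. -/
theorem statement14 (A : Type u) [Ring A] [IsNoetherianRing A]
    (L : Type v) [CompleteLinearOrder L]
    (dim : ∀ (M : Type u) [AddCommGroup M] [Module A M], L)
    (hiso : ∀ (M N : Type u) [AddCommGroup M] [Module A M] [AddCommGroup N] [Module A N],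
      Module.Finite A M → Module.Finite A N → (M ≃ₗ[A] N) → dim M = dim N)
    (hzero : ∀ (M : Type u) [AddCommGroup M] [Module A M],
      Module.Finite A M → Subsingleton M → dim M = ⊥)
    (hexact : ∀ (M' M M'' : Type u)
      [AddCommGroup M'] [Module A M'] [AddCommGroup M] [Module A M]
      [AddCommGroup M''] [Module A M''],
      Module.Finite A M' → Module.Finite A M → Module.Finite A M'' →
      ∀ (f : M' →ₗ[A] M) (g : M →ₗ[A] M''),
        Function.Injective f → Function.Surjective g →
        LinearMap.range f = LinearMap.ker g →
        dim M = max (dim M') (dim M'')) :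
    (∀ (M : Type u) [AddCommGroup M] [Module A M],
      Module.Finite A M → DimExt A L dim M = dim M) ∧
    (∀ (M : Type u) [AddCommGroup M] [Module A M],
      Subsingleton M → DimExt A L dim M = ⊥) ∧
    (∀ (M' M M'' : Type u)
      [AddCommGroup M'] [Module A M'] [AddCommGroup M] [Module A M]
      [AddCommGroup M''] [Module A M''],
      ∀ (f : M' →ₗ[A] M) (g : M →ₗ[A] M''),
        Function.Injective f → Function.Surjective g →
        LinearMap.range f = LinearMap.ker g →
        DimExt A L dim M = max (DimExt A L dim M') (DimExt A L dim M'')) ∧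
    (∀ (Dim' : ∀ (M : Type u) [AddCommGroup M] [Module A M], L),
      (∀ (M N : Type u) [AddCommGroup M] [Module A M] [AddCommGroup N] [Module A N],
        (M ≃ₗ[A] N) → Dim' M = Dim' N) →
      (∀ (M : Type u) [AddCommGroup M] [Module A M],
        Module.Finite A M → Dim' M = dim M) →
      (∀ (M : Type u) [AddCommGroup M] [Module A M],
        Dim' M = sSup {l : L | ∃ N : Submodule A M, N.FG ∧ l = Dim' ↥N}) →
      ∀ (M : Type u) [AddCommGroup M] [Module A M], Dim' M = DimExt A L dim M) := by
  refine ⟨?_, ?_, ?_, ?_⟩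
  · -- agrees with dim on f.g. modules
    intro M _ _ hM
    apply le_antisymm
    · refine sSup_le ?_
      rintro l ⟨N, hN, rfl⟩
      haveI : Module.Finite A ↥N := Module.Finite.iff_fg.mpr hN
      haveI : Module.Finite A (M ⧸ N) :=
        Module.Finite.of_surjective N.mkQ (Submodule.mkQ_surjective N)
      rw [hexact ↥N M (M ⧸ N) ‹_› hM ‹_› N.subtype N.mkQ N.injective_subtype
        (Submodule.mkQ_surjective N) (by rw [Submodule.range_subtype, Submodule.ker_mkQ])]
      exact le_max_left _ _
    · refine le_sSup ⟨⊤, Module.finite_def.mp hM, ?_⟩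
      exact hiso M ↥(⊤ : Submodule A M) hM inferInstance (Submodule.topEquiv).symm
  · -- zero on subsingleton modules
    intro M _ _ hM
    refine le_antisymm (sSup_le ?_) bot_le
    rintro l ⟨N, hN, rfl⟩
    haveI : Module.Finite A ↥N := Module.Finite.iff_fg.mpr hN
    exact (hzero ↥N ‹_› inferInstance).le
  · -- exactness
    intro M' M M'' _ _ _ _ _ _ f g hf hg hfg
    have up1 : DimExt A L dim M' ≤ DimExt A L dim M := by
      refine sSup_le ?_
      rintro l ⟨N, hN, rfl⟩
      haveI : Module.Finite A ↥N := Module.Finite.iff_fg.mpr hN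
      haveI : Module.Finite A ↥(N.map f) := Module.Finite.iff_fg.mpr (hN.map f)
      refine le_trans ?_ (le_sSup ⟨N.map f, hN.map f, rfl⟩)
      exact (hiso _ _ ‹_› ‹_› (Submodule.equivMapOfInjective f hf N)).le
    have up2 : DimExt A L dim M'' ≤ DimExt A L dim M := by
      refine sSup_le ?_
      rintro l ⟨N'', hN'', rfl⟩
      classical
      obtain ⟨s, hs⟩ := hN''
      choose t ht using hg
      set N : Submodule A M := Submodule.span A ↑(s.image t) with hNdef
      have hNfg : N.FG := ⟨s.image t, rfl⟩
      have hmap : N.map g = N'' := by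
        rw [hNdef, Submodule.map_span, ← hs]
        congr 1
        rw [Finset.coe_image, Set.image_image]
        exact (Set.image_congr fun x _ => ht x).trans (Set.image_id _)
      have h1 : dim ↥N'' ≤ dim ↥N := by
        rw [← hmap, St14.key L dim hiso hexact g N hNfg]
        exact le_max_right _ _
      exact h1.trans (le_sSup ⟨N, hNfg, rfl⟩)
    refine le_antisymm (sSup_le ?_) (max_le up1 up2)
    rintro l ⟨N, hN, rfl⟩
    rw [St14.key L dim hiso hexact g N hN]
    refine max_le (le_trans ?_ (le_max_left _ _)) (le_trans ?_ (le_max_right _ _))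
    · have h1 : (N.comap f).map f = LinearMap.ker g ⊓ N := by
        rw [Submodule.map_comap_eq, hfg]
      have h2 : ((N.comap f).map f).FG := by
        rw [h1]; exact St14.fg_of_le inf_le_right hN
      have hfgP : (N.comap f).FG := by
        haveI : Module.Finite A ↥((N.comap f).map f) := Module.Finite.iff_fg.mpr h2
        exact Module.Finite.iff_fg.mp
          (Module.Finite.equiv (Submodule.equivMapOfInjective f hf _).symm)
      have h3 := hiso ↥(N.comap f) ↥(LinearMap.ker g ⊓ N)
        (Module.Finite.iff_fg.mpr hfgP)
        (Module.Finite.iff_fg.mpr (St14.fg_of_le inf_le_right hN))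
        ((Submodule.equivMapOfInjective f hf _).trans (LinearEquiv.ofEq _ _ h1))
      rw [← h3]
      exact le_sSup ⟨N.comap f, hfgP, rfl⟩
    · exact le_sSup ⟨N.map g, hN.map g, rfl⟩
  · -- uniqueness
    intro Dim' hDiso hDfin hDsup M _ _
    rw [hDsup M]
    have key : ∀ (N : Submodule A M), N.FG → Dim' ↥N = dim ↥N :=
      fun N hN => hDfin ↥N (Module.Finite.iff_fg.mpr hN)
    show sSup _ = sSup _
    congr 1
    ext l
    exact ⟨fun ⟨N, hN, h⟩ => ⟨N, hN, h.trans (key N hN)⟩,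
      fun ⟨N, hN, h⟩ => ⟨N, hN, h.trans (key N hN).symm⟩⟩
end
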